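/- Let G = G_l ⊗ G_r be a true twin composition, and assume D_k(H) ≠ ∅ for each H ∈ {G, G_l, G_r} and each 0 ≤ k ≤ |TS(H)|. Then β(G) = β(G_l) + β(G_r). -/
import Mathlib


/-- A finite simple graph on a subset of an ambient vertex type `α`,
together with a designated twin set `TS ⊆ verts`. -/
structure TSGraph (α : Type*) where
  verts : Finset α
  Adj : α → α → Prop
  symm : ∀ u v, Adj u v → Adj v u
  irrefl : ∀ u, ¬ Adj u u
  adj_mem : ∀ u v, Adj u v → u ∈ verts ∧ v ∈ verts
  TS : Finset α
  TS_sub : TS ⊆ verts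

namespace TSGraph

variable {α : Type*} [DecidableEq α]

/-- `f` encodes a perfect matching of the subgraph of `G` induced by `S`:
every vertex of `S` is paired with an adjacent vertex of `S`, involutively. -/
def IsPM (G : TSGraph α) (S : Finset α) (f : α → α) : Prop :=
  ∀ v ∈ S, f v ∈ S ∧ G.Adj v (f v) ∧ f (f v) = v

/-- `S ⊆ V(G)` dominates `V(G) − TS(G)` and, for some `X ⊆ S ∩ TS(G)` of size `k`,
the subgraph induced by `S − X` has a perfect matching. -/
def Adm (G : TSGraph α) (k : ℕ) (S : Finset α) : Prop :=
  S ⊆ G.verts ∧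
  (∀ v ∈ G.verts, v ∉ G.TS → v ∈ S ∨ ∃ u ∈ S, G.Adj u v) ∧
  ∃ X ⊆ S ∩ G.TS, X.card = k ∧ ∃ f, G.IsPM (S \ X) f

/-- Membership in the family `D_k(G)`: admissible of minimum cardinality. -/
def memD (G : TSGraph α) (k : ℕ) (S : Finset α) : Prop :=
  G.Adm k S ∧ ∀ S', G.Adm k S' → S.card ≤ S'.card

/-- `D_k(G) ≠ ∅`. -/
def DkNonempty (G : TSGraph α) (k : ℕ) : Prop := ∃ S, G.memD k S

/-- `D_k(G) ≠ ∅` for all `0 ≤ k ≤ |TS(G)|`. -/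
def AllDkNonempty (G : TSGraph α) : Prop := ∀ k ≤ G.TS.card, G.DkNonempty k

/-- `γ_k(G)`: the common cardinality of the members of `D_k(G)`. -/
noncomputable def gamma (G : TSGraph α) (k : ℕ) : ℕ :=
  sInf {n | ∃ S, G.Adm k S ∧ S.card = n}

/-- A paired-dominating set of `G`. -/
def IsPDS (G : TSGraph α) (D : Finset α) : Prop :=
  D ⊆ G.verts ∧
  (∀ v ∈ G.verts, v ∈ D ∨ ∃ u ∈ D, G.Adj u v) ∧
  ∃ f, G.IsPM D f

/-- `γ_p(G)`: the paired-domination number. -/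
noncomputable def gammaP (G : TSGraph α) : ℕ :=
  sInf {n | ∃ D, G.IsPDS D ∧ D.card = n}

/-- Membership in `D_p(G)`: minimum-cardinality paired-dominating sets. -/
def memDp (G : TSGraph α) (D : Finset α) : Prop :=
  G.IsPDS D ∧ D.card = G.gammaP

/-- `min(G) = min { γ_k(G) : 0 ≤ k ≤ |TS(G)| }`. -/
noncomputable def minVal (G : TSGraph α) : ℕ :=
  sInf {n | ∃ k ≤ G.TS.card, G.gamma k = n}

/-- `α(G)`: the smallest `k` with `γ_k(G) = min(G)`. -/
noncomputable def alphaVal (G : TSGraph α) : ℕ :=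
  sInf {k | k ≤ G.TS.card ∧ G.gamma k = G.minVal}

/-- `β(G)`: the largest `k` with `γ_k(G) = min(G)`. -/
noncomputable def betaVal (G : TSGraph α) : ℕ :=
  sSup {k | k ≤ G.TS.card ∧ G.gamma k = G.minVal}

/-- Membership in `Ψ(G)`: sets in some `D_k(G)` of cardinality `min(G)`. -/
def memPsi (G : TSGraph α) (D : Finset α) : Prop :=
  (∃ k, k ≤ G.TS.card ∧ G.memD k D) ∧ D.card = G.minVal

/-- Equation (2) holds for `G`. -/
def Eq2Holds (G : TSGraph α) : Prop :=
  ∀ k ≤ G.TS.card,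
    (k ≤ G.alphaVal → G.gamma k = G.minVal + G.alphaVal - k) ∧
    (G.betaVal ≤ k → G.gamma k = G.minVal + k - G.betaVal) ∧
    (G.alphaVal < k → k < G.betaVal → Even (k - G.alphaVal) → G.gamma k = G.minVal) ∧
    (G.alphaVal < k → k < G.betaVal → ¬ Even (k - G.alphaVal) → G.gamma k = G.minVal + 1)

/-- `G = Gl ⊗ Gr` (true twin composition). -/
def IsTrueTwin (G Gl Gr : TSGraph α) : Prop :=
  Disjoint Gl.verts Gr.verts ∧
  G.verts = Gl.verts ∪ Gr.verts ∧
  (∀ u v, G.Adj u v ↔ Gl.Adj u v ∨ Gr.Adj u v ∨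
    (u ∈ Gl.TS ∧ v ∈ Gr.TS) ∨ (u ∈ Gr.TS ∧ v ∈ Gl.TS)) ∧
  G.TS = Gl.TS ∪ Gr.TS

/-- `G = Gl ⊙ Gr` (false twin composition). -/
def IsFalseTwin (G Gl Gr : TSGraph α) : Prop :=
  Disjoint Gl.verts Gr.verts ∧
  G.verts = Gl.verts ∪ Gr.verts ∧
  (∀ u v, G.Adj u v ↔ Gl.Adj u v ∨ Gr.Adj u v) ∧
  G.TS = Gl.TS ∪ Gr.TS

/-- `G = Gl ⊕ Gr` (attachment composition). -/
def IsAttach (G Gl Gr : TSGraph α) : Prop :=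
  Disjoint Gl.verts Gr.verts ∧
  G.verts = Gl.verts ∪ Gr.verts ∧
  (∀ u v, G.Adj u v ↔ Gl.Adj u v ∨ Gr.Adj u v ∨
    (u ∈ Gl.TS ∧ v ∈ Gr.TS) ∨ (u ∈ Gr.TS ∧ v ∈ Gl.TS)) ∧
  G.TS = Gl.TS

/-- The twin-set graph `G` arises from a decomposition tree all of whose associated
twin-set graphs satisfy the property `P`. -/
inductive FromDecompTree (P : TSGraph α → Prop) : TSGraph α → Prop where
  | single (G : TSGraph α) (v : α) (hv : G.verts = {v}) (hts : G.TS = {v})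
      (hadj : ∀ u w, ¬ G.Adj u w) (hP : P G) : FromDecompTree P G
  | ttwin (G Gl Gr : TSGraph α) (hl : FromDecompTree P Gl) (hr : FromDecompTree P Gr)
      (h : IsTrueTwin G Gl Gr) (hP : P G) : FromDecompTree P G
  | ftwin (G Gl Gr : TSGraph α) (hl : FromDecompTree P Gl) (hr : FromDecompTree P Gr)
      (h : IsFalseTwin G Gl Gr) (hP : P G) : FromDecompTree P G
  | attach (G Gl Gr : TSGraph α) (hl : FromDecompTree P Gl) (hr : FromDecompTree P Gr)
      (h : IsAttach G Gl Gr) (hP : P G) : FromDecompTree P G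

end TSGraph

namespace TSGraph

variable {α : Type*} [DecidableEq α]

lemma IsTrueTwin.symm' {G Gl Gr : TSGraph α} (h : IsTrueTwin G Gl Gr) :
    IsTrueTwin G Gr Gl := by
  obtain ⟨hd, hv, ha, ht⟩ := h
  refine ⟨hd.symm, by rw [hv, Finset.union_comm], fun u v => ?_,
    by rw [ht, Finset.union_comm]⟩
  rw [ha u v]; tauto

lemma card_split {S Vl Vr : Finset α} (hd : Disjoint Vl Vr) (hsub : S ⊆ Vl ∪ Vr) :
    (S ∩ Vl).card + (S ∩ Vr).card = S.card := by
  rw [← Finset.card_union_of_disjoint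
      (Disjoint.mono Finset.inter_subset_right Finset.inter_subset_right hd),
    ← Finset.inter_union_distrib_left, Finset.inter_eq_left.mpr hsub]

lemma half {G Gl Gr : TSGraph α} (h : IsTrueTwin G Gl Gr) {S X : Finset α} {f : α → α}
    (hsub : S ⊆ G.verts)
    (hdom : ∀ v ∈ G.verts, v ∉ G.TS → v ∈ S ∨ ∃ u ∈ S, G.Adj u v)
    (hX : X ⊆ S ∩ G.TS) (hf : G.IsPM (S \ X) f) :
    ∃ al, al ≤ Gl.TS.card ∧ (X ∩ Gl.verts).card ≤ al ∧ Gl.Adm al (S ∩ Gl.verts) := by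
  classical
  obtain ⟨hd, hv, ha, ht⟩ := h
  have hlr : ∀ x, x ∈ Gl.verts → x ∉ Gr.verts := fun x hx => Finset.disjoint_left.mp hd hx
  have hTSl : ∀ x, x ∈ G.TS → x ∈ Gl.verts → x ∈ Gl.TS := by
    intro x hx hxl
    rw [ht, Finset.mem_union] at hx
    rcases hx with h1 | h1
    · exact h1
    · exact absurd (Gr.TS_sub h1) (hlr x hxl)
  have hcase : ∀ v w, v ∈ Gl.verts → G.Adj v w →
      (Gl.Adj v w ∧ w ∈ Gl.verts) ∨ (v ∈ Gl.TS ∧ w ∈ Gr.TS) := by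
    intro v w hvl hadj
    rcases (ha v w).mp hadj with h1 | h1 | h1 | h1
    · exact Or.inl ⟨h1, (Gl.adj_mem _ _ h1).2⟩
    · exact absurd (Gr.adj_mem _ _ h1).1 (hlr v hvl)
    · exact Or.inr h1
    · exact absurd (Gr.TS_sub h1.1) (hlr v hvl)
  set Cl := (S \ X).filter (fun v => v ∈ Gl.verts ∧ f v ∈ Gr.verts) with hCl
  have hClTS : ∀ v ∈ Cl, v ∈ Gl.TS := by
    intro v hvc
    rw [hCl, Finset.mem_filter] at hvc
    obtain ⟨hvm, hvl, hfr⟩ := hvc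
    rcases hcase v (f v) hvl (hf v hvm).2.1 with h1 | h1
    · exact absurd hfr (hlr _ h1.2)
    · exact h1.1
  refine ⟨((X ∩ Gl.verts) ∪ Cl).card, ?_, ?_, ?_⟩
  · apply Finset.card_le_card
    intro x hx
    rcases Finset.mem_union.mp hx with h1 | h1
    · exact hTSl x (Finset.mem_inter.mp (hX (Finset.mem_inter.mp h1).1)).2 (Finset.mem_inter.mp h1).2
    · exact hClTS x h1
  · exact Finset.card_le_card Finset.subset_union_left
  · refine ⟨Finset.inter_subset_right, ?_, (X ∩ Gl.verts) ∪ Cl, ?_, rfl, f, ?_⟩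
    · -- domination
      intro v hvl hvts
      have hvG : v ∈ G.verts := by rw [hv]; exact Finset.mem_union_left _ hvl
      have hvTS : v ∉ G.TS := fun hh => hvts (hTSl v hh hvl)
      rcases hdom v hvG hvTS with h1 | ⟨u, hu, hadj⟩
      · exact Or.inl (Finset.mem_inter.mpr ⟨h1, hvl⟩)
      · rcases hcase v u hvl (G.symm u v hadj) with h1 | h1
        · exact Or.inr ⟨u, Finset.mem_inter.mpr ⟨hu, h1.2⟩, Gl.symm _ _ h1.1⟩
        · exact absurd h1.1 hvts
    · -- X-set subset
      intro x hx
      rcases Finset.mem_union.mp hx with h1 | h1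
      · obtain ⟨h2, h3⟩ := Finset.mem_inter.mp h1
        have hxS := (Finset.mem_inter.mp (hX h2)).1
        exact Finset.mem_inter.mpr ⟨Finset.mem_inter.mpr ⟨hxS, h3⟩,
          hTSl x (Finset.mem_inter.mp (hX h2)).2 h3⟩
      · have h2 := Finset.mem_filter.mp (hCl ▸ h1)
        exact Finset.mem_inter.mpr ⟨Finset.mem_inter.mpr
          ⟨(Finset.mem_sdiff.mp h2.1).1, h2.2.1⟩, hClTS x h1⟩
    · -- perfect matching on (S ∩ Vl) \ ((X ∩ Vl) ∪ Cl)
      intro v hvm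
      obtain ⟨hv1, hv2⟩ := Finset.mem_sdiff.mp hvm
      obtain ⟨hvS, hvl⟩ := Finset.mem_inter.mp hv1
      have hvnX : v ∉ X := fun hh => hv2 (Finset.mem_union_left _
        (Finset.mem_inter.mpr ⟨hh, hvl⟩))
      have hvnC : v ∉ Cl := fun hh => hv2 (Finset.mem_union_right _ hh)
      have hvM : v ∈ S \ X := Finset.mem_sdiff.mpr ⟨hvS, hvnX⟩
      obtain ⟨hfm, hfa, hff⟩ := hf v hvM
      have hfnr : f v ∉ Gr.verts := by
        intro hh
        exact hvnC (by rw [hCl, Finset.mem_filter]; exact ⟨hvM, hvl, hh⟩)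
      have hadjl : Gl.Adj v (f v) ∧ f v ∈ Gl.verts := by
        rcases hcase v (f v) hvl hfa with h1 | h1
        · exact h1
        · exact absurd (Gr.TS_sub h1.2) hfnr
      obtain ⟨hfS, hfnX⟩ := Finset.mem_sdiff.mp hfm
      have hfnC : f v ∉ Cl := by
        intro hh
        have h2 := (Finset.mem_filter.mp (hCl ▸ hh)).2.2
        rw [hff] at h2
        exact hlr v hvl h2
      refine ⟨Finset.mem_sdiff.mpr ⟨Finset.mem_inter.mpr ⟨hfS, hadjl.2⟩, ?_⟩,
        hadjl.1, hff⟩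
      intro hh
      rcases Finset.mem_union.mp hh with h1 | h1
      · exact hfnX (Finset.mem_inter.mp h1).1
      · exact hfnC h1

lemma forward {G Gl Gr : TSGraph α} (h : IsTrueTwin G Gl Gr) {k : ℕ} {S : Finset α}
    (hS : G.Adm k S) :
    ∃ al ar, al ≤ Gl.TS.card ∧ ar ≤ Gr.TS.card ∧ k ≤ al + ar ∧
      Gl.Adm al (S ∩ Gl.verts) ∧ Gr.Adm ar (S ∩ Gr.verts) ∧
      (S ∩ Gl.verts).card + (S ∩ Gr.verts).card = S.card := by
  obtain ⟨hsub, hdom, X, hX, hXc, f, hf⟩ := hS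
  obtain ⟨al, hal, halX, hAl⟩ := half h hsub hdom hX hf
  obtain ⟨ar, har, harX, hAr⟩ := half h.symm' hsub hdom hX hf
  have hd := h.1
  have hSsub : S ⊆ Gl.verts ∪ Gr.verts := by rw [← h.2.1]; exact hsub
  have hXsub : X ⊆ Gl.verts ∪ Gr.verts :=
    fun x hx => hSsub (Finset.mem_inter.mp (hX hx)).1
  have hXk : (X ∩ Gl.verts).card + (X ∩ Gr.verts).card = k := by
    rw [card_split hd hXsub, hXc]
  exact ⟨al, ar, hal, har, by omega, hAl, hAr, card_split hd hSsub⟩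

lemma backward {G Gl Gr : TSGraph α} (h : IsTrueTwin G Gl Gr) {al ar : ℕ}
    {Sl Sr : Finset α} (hl : Gl.Adm al Sl) (hr : Gr.Adm ar Sr) :
    G.Adm (al + ar) (Sl ∪ Sr) := by
  classical
  obtain ⟨hd, hv, ha, ht⟩ := h
  obtain ⟨hls, hld, Xl, hXl, hXlc, fl, hfl⟩ := hl
  obtain ⟨hrs, hrd, Xr, hXr, hXrc, fr, hfr⟩ := hr
  have hXlv : Xl ⊆ Gl.verts := fun x hx => Gl.TS_sub (Finset.mem_inter.mp (hXl hx)).2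
  have hXrv : Xr ⊆ Gr.verts := fun x hx => Gr.TS_sub (Finset.mem_inter.mp (hXr hx)).2
  refine ⟨?_, ?_, Xl ∪ Xr, ?_, ?_, fun v => if v ∈ Sl \ Xl then fl v else fr v, ?_⟩
  · rw [hv]; exact Finset.union_subset_union hls hrs
  · intro v hvG hvTS
    rw [hv, Finset.mem_union] at hvG
    rw [ht] at hvTS
    rcases hvG with h1 | h1
    · have hnts : v ∉ Gl.TS := fun hh => hvTS (Finset.mem_union_left _ hh)
      rcases hld v h1 hnts with h2 | ⟨u, hu, hadj⟩
      · exact Or.inl (Finset.mem_union_left _ h2)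
      · exact Or.inr ⟨u, Finset.mem_union_left _ hu, (ha u v).mpr (Or.inl hadj)⟩
    · have hnts : v ∉ Gr.TS := fun hh => hvTS (Finset.mem_union_right _ hh)
      rcases hrd v h1 hnts with h2 | ⟨u, hu, hadj⟩
      · exact Or.inl (Finset.mem_union_right _ h2)
      · exact Or.inr ⟨u, Finset.mem_union_right _ hu,
          (ha u v).mpr (Or.inr (Or.inl hadj))⟩
  · intro x hx
    rw [ht]
    rcases Finset.mem_union.mp hx with h1 | h1
    · obtain ⟨h2, h3⟩ := Finset.mem_inter.mp (hXl h1)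
      exact Finset.mem_inter.mpr ⟨Finset.mem_union_left _ h2, Finset.mem_union_left _ h3⟩
    · obtain ⟨h2, h3⟩ := Finset.mem_inter.mp (hXr h1)
      exact Finset.mem_inter.mpr ⟨Finset.mem_union_right _ h2, Finset.mem_union_right _ h3⟩
  · rw [Finset.card_union_of_disjoint (Disjoint.mono hXlv hXrv hd), hXlc, hXrc]
  · intro v hvm
    dsimp only
    obtain ⟨hv1, hv2⟩ := Finset.mem_sdiff.mp hvm
    have hnXl : v ∉ Xl := fun hh => hv2 (Finset.mem_union_left _ hh)
    have hnXr : v ∉ Xr := fun hh => hv2 (Finset.mem_union_right _ hh)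
    rcases Finset.mem_union.mp hv1 with h1 | h1
    · have hvml : v ∈ Sl \ Xl := Finset.mem_sdiff.mpr ⟨h1, hnXl⟩
      obtain ⟨hfm, hfa, hff⟩ := hfl v hvml
      obtain ⟨hfS, hfX⟩ := Finset.mem_sdiff.mp hfm
      have e1 : (if v ∈ Sl \ Xl then fl v else fr v) = fl v := if_pos hvml
      rw [e1]
      have e2 : (if fl v ∈ Sl \ Xl then fl (fl v) else fr (fl v)) = fl (fl v) := if_pos hfm
      refine ⟨Finset.mem_sdiff.mpr ⟨Finset.mem_union_left _ hfS, ?_⟩,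
        (ha v (fl v)).mpr (Or.inl hfa), by rw [e2, hff]⟩
      intro hh
      rcases Finset.mem_union.mp hh with h2 | h2
      · exact hfX h2
      · exact Finset.disjoint_left.mp hd (hls hfS) (hXrv h2)
    · have hnl : v ∉ Sl \ Xl := by
        intro hh
        exact Finset.disjoint_left.mp hd (hls (Finset.mem_sdiff.mp hh).1) (hrs h1)
      have hvmr : v ∈ Sr \ Xr := Finset.mem_sdiff.mpr ⟨h1, hnXr⟩
      obtain ⟨hfm, hfa, hff⟩ := hfr v hvmr
      obtain ⟨hfS, hfX⟩ := Finset.mem_sdiff.mp hfm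
      have e1 : (if v ∈ Sl \ Xl then fl v else fr v) = fr v := if_neg hnl
      rw [e1]
      have hfnl : fr v ∉ Sl \ Xl := by
        intro hh
        exact Finset.disjoint_left.mp hd (hls (Finset.mem_sdiff.mp hh).1) (hrs hfS)
      have e2 : (if fr v ∈ Sl \ Xl then fl (fr v) else fr (fr v)) = fr (fr v) := if_neg hfnl
      refine ⟨Finset.mem_sdiff.mpr ⟨Finset.mem_union_right _ hfS, ?_⟩,
        (ha v (fr v)).mpr (Or.inr (Or.inl hfa)), by rw [e2, hff]⟩
      intro hh
      rcases Finset.mem_union.mp hh with h2 | h2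
      · exact Finset.disjoint_left.mp hd (hXlv h2) (hrs hfS)
      · exact hfX h2

lemma gamma_le' {G : TSGraph α} {k : ℕ} {S : Finset α} (hS : G.Adm k S) :
    G.gamma k ≤ S.card :=
  Nat.sInf_le ⟨S, hS, rfl⟩

lemma exists_gamma {G : TSGraph α} (hG : G.AllDkNonempty) {k : ℕ} (hk : k ≤ G.TS.card) :
    ∃ S, G.Adm k S ∧ S.card = G.gamma k := by
  obtain ⟨S, hS, _⟩ := hG k hk
  have hne : {n | ∃ S, G.Adm k S ∧ S.card = n}.Nonempty := ⟨S.card, S, hS, rfl⟩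
  exact Nat.sInf_mem hne

lemma minVal_le' {G : TSGraph α} {k : ℕ} (hk : k ≤ G.TS.card) : G.minVal ≤ G.gamma k :=
  Nat.sInf_le ⟨k, hk, rfl⟩

lemma exists_minVal (G : TSGraph α) : ∃ k ≤ G.TS.card, G.gamma k = G.minVal := by
  have hne : {n | ∃ k ≤ G.TS.card, G.gamma k = n}.Nonempty := ⟨G.gamma 0, 0, Nat.zero_le _, rfl⟩
  exact Nat.sInf_mem hne

lemma beta_mem (G : TSGraph α) : G.betaVal ≤ G.TS.card ∧ G.gamma G.betaVal = G.minVal := by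
  have hne : {k | k ≤ G.TS.card ∧ G.gamma k = G.minVal}.Nonempty := by
    obtain ⟨k, hk, he⟩ := exists_minVal G
    exact ⟨k, hk, he⟩
  have hbdd : BddAbove {k | k ≤ G.TS.card ∧ G.gamma k = G.minVal} :=
    ⟨G.TS.card, fun k hk => hk.1⟩
  exact Nat.sSup_mem hne hbdd

lemma le_beta {G : TSGraph α} {k : ℕ} (hk : k ≤ G.TS.card) (he : G.gamma k = G.minVal) :
    k ≤ G.betaVal :=
  le_csSup ⟨G.TS.card, fun k hk => hk.1⟩ ⟨hk, he⟩

end TSGraph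

open TSGraph in
/-- For a true twin composition `G = Gl ⊗ Gr` with all `D_k`
families nonempty, `β(G) = β(Gl) + β(Gr)`. -/
theorem stmt9 {α : Type*} [DecidableEq α] (G Gl Gr : TSGraph α)
    (hcomp : IsTrueTwin G Gl Gr)
    (hG : G.AllDkNonempty) (hGl : Gl.AllDkNonempty) (hGr : Gr.AllDkNonempty) :
    G.betaVal = Gl.betaVal + Gr.betaVal := by
  have hd := hcomp.1
  have htd : Disjoint Gl.TS Gr.TS := Disjoint.mono Gl.TS_sub Gr.TS_sub hd
  have htc : Gl.TS.card + Gr.TS.card = G.TS.card := by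
    rw [hcomp.2.2.2, Finset.card_union_of_disjoint htd]
  have hminle : G.minVal ≤ Gl.minVal + Gr.minVal := by
    obtain ⟨kl, hkl, hgl⟩ := exists_minVal Gl
    obtain ⟨kr, hkr, hgr⟩ := exists_minVal Gr
    obtain ⟨Sl, hSl, hSlc⟩ := exists_gamma hGl hkl
    obtain ⟨Sr, hSr, hSrc⟩ := exists_gamma hGr hkr
    have h2 := gamma_le' (backward hcomp hSl hSr)
    have h3 : (Sl ∪ Sr).card ≤ Sl.card + Sr.card := Finset.card_union_le _ _
    have h1 : G.minVal ≤ G.gamma (kl + kr) := minVal_le' (by omega)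
    omega
  have hminge : Gl.minVal + Gr.minVal ≤ G.minVal := by
    obtain ⟨k, hk, hg⟩ := exists_minVal G
    obtain ⟨S, hS, hSc⟩ := exists_gamma hG hk
    obtain ⟨al, ar, hal, har, _, hAl, hAr, hcards⟩ := forward hcomp hS
    have h1 := gamma_le' hAl
    have h2 := gamma_le' hAr
    have h3 := minVal_le' (G := Gl) hal
    have h4 := minVal_le' (G := Gr) har
    omega
  obtain ⟨hbl, hgbl⟩ := beta_mem Gl
  obtain ⟨hbr, hgbr⟩ := beta_mem Gr
  have hge : Gl.betaVal + Gr.betaVal ≤ G.betaVal := by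
    obtain ⟨Sl, hSl, hSlc⟩ := exists_gamma hGl hbl
    obtain ⟨Sr, hSr, hSrc⟩ := exists_gamma hGr hbr
    have h2 := gamma_le' (backward hcomp hSl hSr)
    have h3 : (Sl ∪ Sr).card ≤ Sl.card + Sr.card := Finset.card_union_le _ _
    have h1 : G.minVal ≤ G.gamma (Gl.betaVal + Gr.betaVal) := minVal_le' (by omega)
    exact le_beta (by omega) (by omega)
  have hle : G.betaVal ≤ Gl.betaVal + Gr.betaVal := by
    obtain ⟨hb, hgb⟩ := beta_mem G
    obtain ⟨S, hS, hSc⟩ := exists_gamma hG hb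
    obtain ⟨al, ar, hal, har, hkle, hAl, hAr, hcards⟩ := forward hcomp hS
    have h1 := gamma_le' hAl
    have h2 := gamma_le' hAr
    have h3 := minVal_le' (G := Gl) hal
    have h4 := minVal_le' (G := Gr) har
    have h5 : Gl.gamma al = Gl.minVal := by omega
    have h6 : Gr.gamma ar = Gr.minVal := by omega
    have h7 := le_beta hal h5
    have h8 := le_beta har h6
    omega
  omega
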